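/- (FVI equals symplectic-Euler-type scheme with linear damping for α = 1/2.) Let m, ρ, 𝔠 > 0, h > 0 and U : ℝ → ℝ differentiable. Consider the discrete Lagrangian L_d(u,v) = (1/(2h)) m (v-u)² - h U(v) and the restricted fractional discrete Euler–Lagrange equation with α = 1/2: m (x_{k+1} - 2x_k + x_{k-1})/h² + U'(x_k) + ρ Δ_-^{1/2}Δ_-^{1/2} x_k = 0. Setting p_{x_k} := m (x_{k+1} - x_k)/h, this scheme is equivalent to the map x_{k+1} = x_k + h m^{-1} p_{x_k}, p_{x_{k+1}} = p_{x_k} - h U'(x_{k+1}) - h ρ m^{-1} p_{x_k}. -/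

import Mathlib

open Finset

/-- Grünwald–Letnikov coefficients: `α_n = (-1)^n * binom(α, n)`,
i.e. `α_0 = 1`, `α_n = -α(1-α)(2-α)⋯(n-1-α)/n!` for `n ≥ 1`. -/
noncomputable def glCoef (α : ℝ) (n : ℕ) : ℝ :=
  (-1 : ℝ) ^ n * (∏ i ∈ Finset.range n, (α - (i : ℝ))) / (n.factorial : ℝ)

/-- Retarded discrete fractional derivative `Δ_-^α z_k`. -/
noncomputable def dfracMinus (α h : ℝ) (z : ℕ → ℝ) (k : ℕ) : ℝ :=
  h ^ (-α) * ∑ n ∈ Finset.range (k + 1), glCoef α n * z (k - n)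

/-- Advanced discrete fractional derivative `Δ_+^α z_k` (with horizon `N`). -/
noncomputable def dfracPlus (α h : ℝ) (N : ℕ) (z : ℕ → ℝ) (k : ℕ) : ℝ :=
  h ^ (-α) * ∑ n ∈ Finset.range (N - k + 1), glCoef α n * z (k + n)

/-- Composed retarded operator `Δ_-^α Δ_-^α z_k`. -/
noncomputable def ddfracMinus (α h : ℝ) (z : ℕ → ℝ) (k : ℕ) : ℝ :=
  h ^ (-(2 * α)) * ∑ n ∈ Finset.range (k + 1), glCoef α n *
    ∑ p ∈ Finset.range (k - n + 1), glCoef α p * z (k - n - p)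

/-- Composed advanced operator `Δ_+^α Δ_+^α z_k`. -/
noncomputable def ddfracPlus (α h : ℝ) (N : ℕ) (z : ℕ → ℝ) (k : ℕ) : ℝ :=
  h ^ (-(2 * α)) * ∑ n ∈ Finset.range (N - k + 1), glCoef α n *
    ∑ p ∈ Finset.range (N - k - n + 1), glCoef α p * z (k + n + p)

lemma descPochhammer_smeval_prod (r : ℝ) (n : ℕ) :
    Polynomial.smeval (descPochhammer ℤ n) r = ∏ i ∈ Finset.range n, (r - (i : ℝ)) := by
  induction n with
  | zero => simp [descPochhammer_zero, Polynomial.smeval_one]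
  | succ n ih =>
      rw [descPochhammer_succ_right, Polynomial.smeval_mul, ih, Finset.prod_range_succ,
        Polynomial.smeval_sub, Polynomial.smeval_X, Polynomial.smeval_natCast]
      push_cast
      ring

lemma ring_choose_eq (r : ℝ) (n : ℕ) :
    Ring.choose r n = (∏ i ∈ Finset.range n, (r - (i : ℝ))) / (n.factorial : ℝ) := by
  have h := Ring.descPochhammer_eq_factorial_smul_choose r n
  rw [descPochhammer_smeval_prod, nsmul_eq_mul] at h
  field_simp [Nat.factorial_ne_zero] 
  rw [h]; ring

lemma glCoef_eq_choose (α : ℝ) (n : ℕ) :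
    glCoef α n = (-1 : ℝ) ^ n * Ring.choose α n := by
  rw [glCoef, ring_choose_eq, mul_div_assoc]

lemma glCoef_conv (j : ℕ) :
    ∑ n ∈ Finset.range (j + 1), glCoef (1/2) n * glCoef (1/2) (j - n) = glCoef 1 j := by
  have hv := Ring.add_choose_eq (R := ℝ) (r := 1/2) (s := 1/2) j (Commute.all _ _)
  rw [Finset.Nat.sum_antidiagonal_eq_sum_range_succ_mk] at hv
  norm_num at hv
  calc ∑ n ∈ Finset.range (j + 1), glCoef (1/2) n * glCoef (1/2) (j - n)
      = ∑ n ∈ Finset.range (j + 1),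
          (-1 : ℝ) ^ j * (Ring.choose (1/2 : ℝ) n * Ring.choose (1/2 : ℝ) (j - n)) := by
        apply Finset.sum_congr rfl
        intro n hn
        rw [Finset.mem_range] at hn
        rw [glCoef_eq_choose, glCoef_eq_choose]
        have : (-1 : ℝ) ^ n * (-1 : ℝ) ^ (j - n) = (-1 : ℝ) ^ j := by
          rw [← pow_add]; congr 1; omega
        calc (-1:ℝ)^n * Ring.choose (1/2:ℝ) n * ((-1:ℝ)^(j-n) * Ring.choose (1/2:ℝ) (j-n))
            = ((-1:ℝ)^n * (-1:ℝ)^(j-n)) * (Ring.choose (1/2:ℝ) n * Ring.choose (1/2:ℝ) (j-n)) := by ring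
          _ = _ := by rw [this]
    _ = (-1 : ℝ) ^ j * Ring.choose (1 : ℝ) j := by rw [← Finset.mul_sum, hv]
    _ = glCoef 1 j := (glCoef_eq_choose 1 j).symm

lemma glCoef_one_zero : glCoef 1 0 = 1 := by simp [glCoef]
lemma glCoef_one_one : glCoef 1 1 = -1 := by simp [glCoef]
lemma glCoef_one_ge_two (j : ℕ) : glCoef 1 (j + 2) = 0 := by
  rw [glCoef]
  have : ∏ i ∈ Finset.range (j + 2), ((1:ℝ) - (i : ℝ)) = 0 := by
    apply Finset.prod_eq_zero (i := 1) (by simp) (by norm_num)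
  rw [this]; ring

lemma sum_triangle (k : ℕ) (f : ℕ → ℕ → ℝ) :
    ∑ n ∈ Finset.range (k + 1), ∑ p ∈ Finset.range (k - n + 1), f n p
      = ∑ j ∈ Finset.range (k + 1), ∑ n ∈ Finset.range (j + 1), f n (j - n) := by
  rw [Finset.sum_sigma', Finset.sum_sigma']
  apply Finset.sum_nbij' (i := fun q => ⟨q.1 + q.2, q.1⟩) (j := fun q => ⟨q.2, q.1 - q.2⟩)
  · rintro ⟨n, p⟩ hq
    simp only [Finset.mem_sigma, Finset.mem_range] at *
    omega
  · rintro ⟨j, n⟩ hq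
    simp only [Finset.mem_sigma, Finset.mem_range] at *
    omega
  · rintro ⟨n, p⟩ hq; simp
  · rintro ⟨j, n⟩ hq
    simp only [Finset.mem_sigma, Finset.mem_range] at hq
    simp only [Sigma.mk.inj_iff]
    constructor
    · omega
    · simp
  · rintro ⟨n, p⟩ hq; simp

lemma ddfracMinus_half (h : ℝ) (x : ℕ → ℝ) (k : ℕ) (hk : 1 ≤ k) :
    ddfracMinus (1/2) h x k = h ^ (-(1:ℝ)) * (x k - x (k - 1)) := by
  obtain ⟨k', rfl⟩ : ∃ k', k = k' + 1 := ⟨k - 1, by omega⟩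
  rw [ddfracMinus, show -(2 * (1/2 : ℝ)) = (-1 : ℝ) by norm_num]
  congr 1
  simp only [Finset.mul_sum]
  rw [sum_triangle (k' + 1) (fun n p => glCoef (1/2) n * (glCoef (1/2) p * x (k' + 1 - n - p)))]
  have hinner : ∀ j ∈ Finset.range (k' + 1 + 1),
      (∑ n ∈ Finset.range (j + 1),
        glCoef (1/2) n * (glCoef (1/2) (j - n) * x (k' + 1 - n - (j - n))))
      = glCoef 1 j * x (k' + 1 - j) := by
    intro j hj
    rw [Finset.mem_range] at hj
    rw [← glCoef_conv j, Finset.sum_mul]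
    apply Finset.sum_congr rfl
    intro n hn
    rw [Finset.mem_range] at hn
    have : k' + 1 - n - (j - n) = k' + 1 - j := by omega
    rw [this]; ring
  rw [Finset.sum_congr rfl hinner, Finset.sum_range_succ', Finset.sum_range_succ']
  have hz : ∀ i ∈ Finset.range k', glCoef 1 (i + 1 + 1) * x (k' + 1 - (i + 1 + 1)) = 0 := by
    intro i _
    rw [glCoef_one_ge_two]; ring
  rw [Finset.sum_congr rfl hz, Finset.sum_const_zero]
  simp [glCoef_one_zero, glCoef_one_one]
  ring


/-- for `α = 1/2` the fractional variational integrator for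
`L_d(u,v) = (1/(2h)) m (v-u)² - h U(v)` is equivalent to the symplectic-Euler-type
scheme with linear damping, via the discrete momentum `p_k = m(x_{k+1}-x_k)/h`. -/
theorem fvi_half_eq_damped_symplectic_euler (m ρ 𝔠 h : ℝ)
    (hm : 0 < m) (hρ : 0 < ρ) (h𝔠 : 0 < 𝔠) (hh : 0 < h)
    (U : ℝ → ℝ) (hU : Differentiable ℝ U)
    (x p : ℕ → ℝ) (hp : ∀ k, p k = m * (x (k + 1) - x k) / h) :
    (∀ k, 1 ≤ k →
      m * (x (k + 1) - 2 * x k + x (k - 1)) / h ^ 2 + deriv U (x k)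
        + ρ * ddfracMinus (1 / 2) h x k = 0)
    ↔ (∀ k, x (k + 1) = x k + h * m⁻¹ * p k ∧
        p (k + 1) = p k - h * deriv U (x (k + 1)) - h * ρ * m⁻¹ * p k) := by

  constructor
  · intro hel k
    constructor
    · rw [hp k]; field_simp; ring
    · have h1 := hel (k + 1) (by omega)
      rw [ddfracMinus_half h x (k + 1) (by omega), Real.rpow_neg_one] at h1
      simp only [Nat.add_sub_cancel] at h1
      rw [hp (k + 1), hp k]
      field_simp at h1 ⊢
      linear_combination h1
  · intro hs k hk
    obtain ⟨j, rfl⟩ : ∃ j, k = j + 1 := ⟨k - 1, by omega⟩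
    have h2 := (hs j).2
    have h1 := (hs j).1
    have h1' := (hs (j + 1)).1
    rw [hp (j + 1), hp j] at h2
    rw [ddfracMinus_half h x (j + 1) (by omega), Real.rpow_neg_one]
    simp only [Nat.add_sub_cancel]
    field_simp at h2
    have h2c : m * (x (j+1+1) - 2 * x (j+1) + x j) + h^2 * deriv U (x (j+1))
        + h * ρ * (x (j+1) - x j) = 0 := by
      apply mul_left_cancel₀ (show (m * h^2 : ℝ) ≠ 0 by positivity)
      linear_combination (m * h ^ 2) * h2
    have hrw : m * (x (j+1+1) - 2 * x (j+1) + x j) / h^2 + deriv U (x (j+1))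
        + ρ * (h⁻¹ * (x (j+1) - x j))
        = (m * (x (j+1+1) - 2 * x (j+1) + x j) + h^2 * deriv U (x (j+1))
            + h * ρ * (x (j+1) - x j)) / h^2 := by
      field_simp
    rw [hrw, h2c, zero_div]
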